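/- Let M be an ε-differentially private mechanism on a space X, meaning for all x, x' ∈ X and measurable S, P(M(x) ∈ S) ≤ e^ε P(M(x') ∈ S). Let π be a prior on X and V = f(X) for a measurable function f. Then for any measurable sets A, A' ⊂ f(X) with π_V(A') > 0 and any output z with positive density, the posterior satisfies π_V(A | z) / π_V(A' | z) ≤ e^ε · π_V(A) / π_V(A'). -/

import Mathlib

open MeasureTheory Real
open scoped ENNReal

/-- Bayes-rule posterior ratio bound under ε-differential privacy.
The mechanism `M` is represented by its density `g x z` (the density of `M(x)` at output `z`
with respect to a reference measure on `Z`); ε-DP is the pointwise likelihood-ratio bound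
`g x z ≤ e^ε g x' z`.  The posterior of `V = f(X)` given output `z` is, by Bayes' rule,
`π_V(A | z) = (∫_{f⁻¹ A} g x z dπ) / (∫ g x z dπ)`, so the ratio of posteriors of `A` and
`A'` equals the displayed ratio of restricted integrals. -/
theorem posterior_ratio_bound_of_DP
    {X Z V : Type*} [MeasurableSpace X] [MeasurableSpace Z] [MeasurableSpace V]
    (pri : Measure X) [IsProbabilityMeasure pri]
    (g : X → Z → ℝ≥0∞) (ε : ℝ)
    (hDP : ∀ x x' : X, ∀ z : Z, g x z ≤ ENNReal.ofReal (exp ε) * g x' z)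
    (f : X → V) (hf : Measurable f)
    (A A' : Set V) (hA : MeasurableSet A) (hA' : MeasurableSet A')
    (hA'pos : 0 < pri (f ⁻¹' A'))
    (z : Z) (hz : 0 < ∫⁻ x, g x z ∂pri) :
    (∫⁻ x in f ⁻¹' A, g x z ∂pri) / (∫⁻ x in f ⁻¹' A', g x z ∂pri)
      ≤ ENNReal.ofReal (exp ε) * (pri (f ⁻¹' A) / pri (f ⁻¹' A')) := by
  set C := ENNReal.ofReal (exp ε) with hC
  set IA := ∫⁻ x in f ⁻¹' A, g x z ∂pri with hIA
  set IA' := ∫⁻ x in f ⁻¹' A', g x z ∂pri with hIA'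
  set pA := pri (f ⁻¹' A) with hpA
  set pA' := pri (f ⁻¹' A') with hpA'
  have hC0 : C ≠ 0 := by simp [hC, ENNReal.ofReal_eq_zero, exp_pos ε, not_le, (exp_pos ε)]
  have hCtop : C ≠ ⊤ := ENNReal.ofReal_ne_top
  have hpA'0 : pA' ≠ 0 := hA'pos.ne'
  have hpA'top : pA' ≠ ⊤ := (measure_lt_top pri _).ne
  -- key inequality
  have key : IA * pA' ≤ C * pA * IA' := by
    have h1 : ∀ x' : X, IA ≤ C * g x' z * pA := by
      intro x'
      calc IA ≤ ∫⁻ _ in f ⁻¹' A, C * g x' z ∂pri :=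
            lintegral_mono fun x => hDP x x' z
        _ = C * g x' z * pA := by
            rw [lintegral_const, Measure.restrict_apply MeasurableSet.univ, Set.univ_inter]
    have h2 : IA * pA' = ∫⁻ _ in f ⁻¹' A', IA ∂pri := by
      rw [lintegral_const, Measure.restrict_apply MeasurableSet.univ, Set.univ_inter]
    calc IA * pA' = ∫⁻ x' in f ⁻¹' A', IA ∂pri := h2
      _ ≤ ∫⁻ x' in f ⁻¹' A', C * g x' z * pA ∂pri := lintegral_mono fun x' => h1 x'
      _ = ∫⁻ x' in f ⁻¹' A', C * pA * g x' z ∂pri := by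
            congr 1; ext x'; ring
      _ = C * pA * IA' := lintegral_const_mul' _ _ (by
            exact ENNReal.mul_ne_top hCtop (measure_lt_top pri _).ne)
  rcases eq_or_ne IA' 0 with h0 | h0
  · have : IA * pA' = 0 := le_antisymm (by simpa [h0] using key) zero_le
    have hIA0 : IA = 0 := by
      rcases mul_eq_zero.mp this with h | h
      · exact h
      · exact absurd h hpA'0
    simp [hIA0]
  rcases eq_or_ne IA' ⊤ with htop | htop
  · simp [htop]
  rw [ENNReal.div_le_iff h0 htop]
  have heq : C * (pA / pA') * IA' = C * pA * IA' / pA' := by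
    rw [div_eq_mul_inv, div_eq_mul_inv]; ring
  rw [heq, ENNReal.le_div_iff_mul_le (Or.inl hpA'0) (Or.inl hpA'top)]
  calc IA * pA' ≤ C * pA * IA' := key
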